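/- arXiv:2508.15071 — 6 statements merged into one kernel-verified Lean document; each statement's English description precedes it below -/
import Mathlib

section
/- If f : ℝ^d → ℝ is nonnegative, coordinate-wise smooth with constants L_1,…,L_d, and its infimum f* satisfies f* ≥ 0, then the NGN-D per-coordinate step-size γ_j = c_j/(1 + (c_j/(2 f(x)))(∂_j f(x))²) satisfies c_j/(1 + c_j L_j) ≤ γ_j ≤ c_j for all x with f(x) > 0 and all coordinates j. -/
open RealInnerProductSpace

theorem ngn_d_stepsize_bounds {d : ℕ}
    (f : EuclideanSpace ℝ (Fin d) → ℝ)
    (g : EuclideanSpace ℝ (Fin d) → EuclideanSpace ℝ (Fin d))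
    (hgrad : ∀ x, HasGradientAt f (g x) x)
    (L : Fin d → ℝ) (hL : ∀ j, 0 ≤ L j)
    (hsmooth : ∀ x h, f (x + h) ≤ f x + ⟪g x, h⟫ + (1/2) * ∑ j, L j * (h j) ^ 2)
    (hnonneg : ∀ x, 0 ≤ f x)
    (fstar : ℝ) (hglb : IsGLB (Set.range f) fstar) (hfstar : 0 ≤ fstar)
    (c : Fin d → ℝ) (hc : ∀ j, 0 < c j)
    (x : EuclideanSpace ℝ (Fin d)) (hx : 0 < f x) (j : Fin d) :
    c j / (1 + c j * L j) ≤ c j / (1 + c j / (2 * f x) * (g x j) ^ 2) ∧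
      c j / (1 + c j / (2 * f x) * (g x j) ^ 2) ≤ c j := by
  have hquad : ∀ t : ℝ, 0 ≤ (L j / 2) * t ^ 2 + (g x j) * t + f x := by
    intro t
    have h1 := hsmooth x (EuclideanSpace.single j t)
    have h2 := hnonneg (x + EuclideanSpace.single j t)
    have hin : ⟪g x, EuclideanSpace.single j t⟫ = g x j * t := by
      simp [EuclideanSpace.inner_single_right, mul_comm]
    have hsum : ∑ i, L i * (EuclideanSpace.single j t i) ^ 2 = L j * t ^ 2 := by
      rw [Finset.sum_eq_single j]
      · simp
      · intro i _ hi; simp [EuclideanSpace.single_apply, hi]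
      · simp
    rw [hin, hsum] at h1
    nlinarith
  have hdisc : discrim (L j / 2) (g x j) (f x) ≤ 0 :=
    discrim_le_zero fun t => by have := hquad t; nlinarith [this]
  have hkey : (g x j) ^ 2 ≤ 2 * L j * f x := by
    have : discrim (L j / 2) (g x j) (f x) = (g x j) ^ 2 - 4 * (L j / 2) * f x := by
      unfold discrim; ring
    nlinarith [hdisc, this]
  have hgsq : 0 ≤ (g x j) ^ 2 := sq_nonneg _
  have hcj := hc j
  have hden1 : (0:ℝ) < 1 + c j / (2 * f x) * (g x j) ^ 2 := by positivity
  constructor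
  · apply div_le_div_of_nonneg_left hcj.le hden1
    have : c j / (2 * f x) * (g x j) ^ 2 ≤ c j * L j := by
      rw [div_mul_eq_mul_div, div_le_iff₀ (by linarith)]
      nlinarith
    linarith
  · have h1 : c j / (1 + c j / (2 * f x) * (g x j) ^ 2) ≤ c j / 1 := by
      apply div_le_div_of_nonneg_left hcj.le one_pos
      have : 0 ≤ c j / (2 * f x) * (g x j) ^ 2 := by positivity
      linarith
    simpa using h1
end

section
/- Let f : ℝ^d → ℝ be convex and L-smooth with infimum f* ≥ 0, and let γ = c/(1 + (c/(2f(x)))‖∇f(x)‖²) be the NGN step-size at x. Then γ² ‖∇f(x)‖² ≤ (4cL/(1+2cL)) γ (f(x) − f*) + (2c²L/(1+cL)) · max{(2cL−1)/(2cL+1), 0} · f*. -/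
open InnerProductSpace

theorem ngn_descent {d : ℕ}
    (f : EuclideanSpace ℝ (Fin d) → ℝ)
    (g : EuclideanSpace ℝ (Fin d) → EuclideanSpace ℝ (Fin d))
    (hgrad : ∀ x, HasGradientAt f (g x) x)
    (L : ℝ)
    (hsmooth : ∀ x y, ‖g x - g y‖ ≤ L * ‖x - y‖)
    (x y : EuclideanSpace ℝ (Fin d)) :
    f y ≤ f x + inner ℝ (g x) (y - x) + L / 2 * ‖y - x‖ ^ 2 := by
  set v := y - x with hv
  set ψ : ℝ → ℝ := fun t => f (x + t • v) - t * inner ℝ (g x) v - L * t ^ 2 / 2 * ‖v‖ ^ 2 with hψ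
  have hder : ∀ t : ℝ, HasDerivAt ψ
      ((inner ℝ (g (x + t • v)) v : ℝ) - inner ℝ (g x) v - L * t * ‖v‖ ^ 2) t := by
    intro t
    have hcurve : HasDerivAt (fun t : ℝ => x + t • v) v t := by
      simpa using ((hasDerivAt_id t).smul_const v).const_add x
    have h1 : HasDerivAt (fun t : ℝ => f (x + t • v)) ((inner ℝ (g (x + t • v)) v : ℝ)) t := by
      have := (hgrad (x + t • v)).hasFDerivAt.comp_hasDerivAt t hcurve
      exact this
    have h2 : HasDerivAt (fun t : ℝ => t * (inner ℝ (g x) v : ℝ)) (inner ℝ (g x) v : ℝ) t := by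
      simpa using (hasDerivAt_id t).mul_const (inner ℝ (g x) v : ℝ)
    have h3 : HasDerivAt (fun t : ℝ => L * t ^ 2 / 2 * ‖v‖ ^ 2) (L * t * ‖v‖ ^ 2) t := by
      have : HasDerivAt (fun t : ℝ => t ^ 2) (2 * t) t := by
        simpa using hasDerivAt_pow 2 t
      have := ((this.const_mul L).div_const 2).mul_const (‖v‖ ^ 2)
      refine this.congr_deriv ?_
      ring
    exact (h1.sub h2).sub h3
  have hanti : AntitoneOn ψ (Set.Icc 0 1) := by
    apply antitoneOn_of_deriv_nonpos (convex_Icc 0 1)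
    · exact fun t _ => (hder t).continuousAt.continuousWithinAt
    · exact fun t _ => ((hder t).differentiableAt).differentiableWithinAt
    · intro t ht
      rw [interior_Icc] at ht
      rw [(hder t).deriv]
      have h1 : (inner ℝ (g (x + t • v)) v : ℝ) - inner ℝ (g x) v ≤ L * t * ‖v‖ ^ 2 := by
        rw [← inner_sub_left (𝕜 := ℝ) (g (x + t • v)) (g x) v]
        calc (inner ℝ (g (x + t • v) - g x) v : ℝ) ≤ ‖g (x + t • v) - g x‖ * ‖v‖ :=
              real_inner_le_norm _ _
          _ ≤ (L * ‖(x + t • v) - x‖) * ‖v‖ :=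
              mul_le_mul_of_nonneg_right (hsmooth _ _) (norm_nonneg _)
          _ = L * (|t| * ‖v‖) * ‖v‖ := by rw [add_sub_cancel_left, norm_smul]; simp
          _ = L * |t| * ‖v‖ ^ 2 := by ring
          _ = L * t * ‖v‖ ^ 2 := by rw [abs_of_pos ht.1]
      linarith
  have h01 := hanti (Set.mem_Icc.2 ⟨le_refl 0, zero_le_one⟩)
    (Set.mem_Icc.2 ⟨zero_le_one, le_refl 1⟩) zero_le_one
  simp only [hψ, zero_smul, add_zero, one_smul, zero_mul] at h01
  have hxy : x + v = y := by rw [hv]; abel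
  rw [hxy] at h01
  nlinarith [h01]

theorem ngn_key_lemma {d : ℕ}
    (f : EuclideanSpace ℝ (Fin d) → ℝ)
    (g : EuclideanSpace ℝ (Fin d) → EuclideanSpace ℝ (Fin d))
    (hgrad : ∀ x, HasGradientAt f (g x) x)
    (hconv : ConvexOn ℝ Set.univ f)
    (L c : ℝ) (hL : 0 ≤ L) (hc : 0 < c)
    (hsmooth : ∀ x y, ‖g x - g y‖ ≤ L * ‖x - y‖)
    (fstar : ℝ) (hlb : ∀ y, fstar ≤ f y) (hatt : ∃ y, f y = fstar)
    (hfstar : 0 ≤ fstar)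
    (x : EuclideanSpace ℝ (Fin d)) (hx : 0 < f x) :
    (c / (1 + c / (2 * f x) * ‖g x‖ ^ 2)) ^ 2 * ‖g x‖ ^ 2 ≤
      (4 * c * L / (1 + 2 * c * L)) * (c / (1 + c / (2 * f x) * ‖g x‖ ^ 2)) * (f x - fstar)
        + (2 * c ^ 2 * L / (1 + c * L)) * max ((2 * c * L - 1) / (2 * c * L + 1)) 0 * fstar := by
  set F := f x with hF
  set s := ‖g x‖ ^ 2 with hs
  have hs0 : 0 ≤ s := by positivity
  have hA : 0 ≤ F - fstar := by linarith [hlb x]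
  -- key smoothness bound: s ≤ 2 L (F - fstar)
  have hkey : s ≤ 2 * L * (F - fstar) := by
    rcases eq_or_lt_of_le hL with hL0 | hLpos
    · -- L = 0 : show s = 0
      have hz : s = 0 := by
        by_contra hne
        have hspos : 0 < s := lt_of_le_of_ne hs0 (Ne.symm hne)
        set t : ℝ := (F - fstar + 1) / s with ht
        have hdesc := ngn_descent f g hgrad L hsmooth x (x - t • g x)
        have heq : x - t • g x - x = (-t) • g x := by module
        rw [heq] at hdesc
        have hinner : (inner ℝ (g x) ((-t) • g x) : ℝ) = -(t * s) := by
          rw [real_inner_smul_right, real_inner_self_eq_norm_sq, hs]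
          ring
        rw [← hL0, hinner] at hdesc
        simp only [zero_div, zero_mul, add_zero] at hdesc
        have hub := hlb (x - t • g x)
        have hts : t * s = F - fstar + 1 := by
          rw [ht, div_mul_cancel₀ _ (ne_of_gt hspos)]
        rw [hts] at hdesc
        linarith
      rw [hz, ← hL0]; nlinarith
    · have hdesc := ngn_descent f g hgrad L hsmooth x (x - L⁻¹ • g x)
      have hveq : x - L⁻¹ • g x - x = (-L⁻¹) • g x := by module
      rw [hveq] at hdesc
      have hinner : (inner ℝ (g x) ((-L⁻¹) • g x) : ℝ) = -L⁻¹ * s := by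
        rw [real_inner_smul_right, real_inner_self_eq_norm_sq, hs]
      have hnorm : ‖(-L⁻¹) • g x‖ ^ 2 = L⁻¹ ^ 2 * s := by
        rw [norm_smul, mul_pow, Real.norm_eq_abs, abs_neg, abs_inv, abs_of_pos hLpos, hs]
      rw [hinner, hnorm] at hdesc
      have hub := hlb (x - L⁻¹ • g x)
      have hLne : L ≠ 0 := ne_of_gt hLpos
      have h2L : 0 < 2 * L := by linarith
      have hmid : fstar ≤ F - s / (2 * L) := by
        have he : F + -L⁻¹ * s + L / 2 * (L⁻¹ ^ 2 * s) = F - s / (2 * L) := by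
          field_simp; ring
        rw [he] at hdesc
        linarith
      have h2 : s / (2 * L) ≤ F - fstar := by linarith
      have := (div_le_iff₀ h2L).mp h2
      linarith
  have hk : 0 ≤ 2 * L * (F - fstar) - s := sub_nonneg.2 hkey
  -- algebra
  have hD : 0 < 2 * F + c * s := by positivity
  have hden : 0 < 1 + c / (2 * F) * s := by positivity
  have hγ : c / (1 + c / (2 * F) * s) = 2 * c * F / (2 * F + c * s) := by
    rw [div_eq_div_iff (ne_of_gt hden) (ne_of_gt hD)]
    field_simp
  rw [hγ]
  have h2cL : 0 < 1 + 2 * c * L := by positivity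
  have hcL : 0 < 1 + c * L := by positivity
  rcases le_or_gt (2 * c * L) 1 with hcase | hcase
  · -- max = 0
    have hmax : max ((2 * c * L - 1) / (2 * c * L + 1)) 0 = 0 := by
      apply max_eq_right
      apply div_nonpos_of_nonpos_of_nonneg <;> linarith
    rw [hmax, mul_zero, zero_mul, add_zero]
    rw [div_pow, div_mul_eq_mul_div, div_mul_div_comm, div_mul_eq_mul_div]
    rw [div_le_div_iff₀ (by positivity) (by positivity)]
    have hchain : F * s * (1 + 2 * c * L) ≤ 2 * L * (F - fstar) * (2 * F + c * s) := by
      nlinarith [mul_nonneg hx.le hk,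
        mul_nonneg (mul_nonneg hc.le hL) (mul_nonneg hx.le hk),
        mul_nonneg (mul_nonneg (sub_nonneg.2 hcase) hL) (mul_nonneg hA hx.le),
        mul_nonneg (mul_nonneg hc.le hL) (mul_nonneg hA hs0)]
    have hmul := mul_le_mul_of_nonneg_left hchain
      (show (0:ℝ) ≤ 4 * c ^ 2 * F * (2 * F + c * s) by positivity)
    nlinarith [hmul]
  · have hmax : max ((2 * c * L - 1) / (2 * c * L + 1)) 0 = (2 * c * L - 1) / (2 * c * L + 1) := by
      apply max_eq_left
      apply div_nonneg <;> linarith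
    rw [hmax, ← sub_nonneg]
    have hrw : (4 * c * L / (1 + 2 * c * L)) * (2 * c * F / (2 * F + c * s)) * (F - fstar)
        + (2 * c ^ 2 * L / (1 + c * L)) * ((2 * c * L - 1) / (2 * c * L + 1)) * fstar
        - (2 * c * F / (2 * F + c * s)) ^ 2 * s
        = (8 * c ^ 2 * L * F * (F - fstar) * (2 * F + c * s) * (1 + c * L)
            + 2 * c ^ 2 * L * (2 * c * L - 1) * fstar * (2 * F + c * s) ^ 2
            - 4 * c ^ 2 * F ^ 2 * s * (1 + 2 * c * L) * (1 + c * L))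
          / ((1 + 2 * c * L) * (1 + c * L) * (2 * F + c * s) ^ 2) := by
      have h1 : (2 * c * L + 1) = (1 + 2 * c * L) := by ring
      rw [h1]
      field_simp
      ring
    rw [hrw]
    apply div_nonneg _ (by positivity)
    have hw : (0:ℝ) ≤ 2 * c * L - 1 := by linarith
    -- exact positive combination certificate (scaled by 2 c ^ 2)
    have t1 : (0:ℝ) ≤ (2 * c * L - 1) * (c ^ 4 * L * fstar * s ^ 2) :=
      mul_nonneg hw (mul_nonneg (mul_nonneg (by positivity) hfstar) (by positivity : (0:ℝ) ≤ s ^ 2))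
    have t2 : (0:ℝ) ≤ (2 * L * (F - fstar) - s) * (c ^ 2 * F ^ 2) :=
      mul_nonneg hk (by positivity)
    have t3 : (0:ℝ) ≤ (2 * c * L - 1) * (c ^ 2 * L * fstar ^ 2 * F) :=
      mul_nonneg hw (mul_nonneg (mul_nonneg (by positivity) (by positivity : (0:ℝ) ≤ fstar ^ 2)) hx.le)
    have t4 : (0:ℝ) ≤ (2 * L * (F - fstar) - s) * (c ^ 3 * L * F ^ 2) :=
      mul_nonneg hk (by positivity)
    have t5 : (0:ℝ) ≤ (2 * c * L - 1) * (c ^ 3 * L * fstar * (F - fstar) * s) :=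
      mul_nonneg hw (mul_nonneg (mul_nonneg (mul_nonneg (by positivity) hfstar) hA) hs0)
    have t6 : (0:ℝ) ≤ (2 * c * L - 1) * (c ^ 3 * L * fstar ^ 2 * s) :=
      mul_nonneg hw (mul_nonneg (mul_nonneg (by positivity) (by positivity : (0:ℝ) ≤ fstar ^ 2)) hs0)
    have t7 : (0:ℝ) ≤ (2 * L * (F - fstar) - s) * (c ^ 3 * L * fstar * F) :=
      mul_nonneg hk (mul_nonneg (mul_nonneg (by positivity) hfstar) hx.le)
    have t8 : (0:ℝ) ≤ c ^ 2 * L * (F - fstar) ^ 3 :=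
      mul_nonneg (by positivity) (by positivity : (0:ℝ) ≤ (F - fstar) ^ 3)
    have t9 : (0:ℝ) ≤ c ^ 2 * L * fstar * (F - fstar) ^ 2 :=
      mul_nonneg (mul_nonneg (by positivity) hfstar) (by positivity)
    have t10 : (0:ℝ) ≤ c ^ 3 * L ^ 2 * (F - fstar) ^ 3 :=
      mul_nonneg (by positivity) (by positivity : (0:ℝ) ≤ (F - fstar) ^ 3)
    have t11 : (0:ℝ) ≤ c ^ 3 * L ^ 2 * fstar * (F - fstar) ^ 2 :=
      mul_nonneg (mul_nonneg (by positivity) hfstar) (by positivity)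
    linarith [t1, t2, t3, t4, t5, t6, t7, t8, t9, t10, t11]
end

section
/- Let f be an L-smooth function whose per-coordinate smoothness constants are L_j and assume the stochastic gradient has coordinate-wise bounded variance σ_j². If each per-coordinate step-size hyperparameter satisfies c_j ≤ 1/(2L_j), then the NGN-D iterates satisfy min_{0 ≤ k < K} E‖∇f(x^k)‖² ≤ 12(f(x^0) − f*)/(c_min K) + (1/c_min) Σ_{j=1}^d 18 L_j c_j² σ_j², where c_min = min_j c_j. -/
open RealInnerProductSpace

lemma ngn_step_bounds (cj Lj fv g : ℝ) (hc : 0 < cj) (hL : 0 < Lj)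
    (hcL : cj ≤ 1/(2*Lj)) (hf : 0 ≤ fv) (hg : g^2 ≤ 2*Lj*fv) :
    2/3*cj ≤ cj / (1 + cj/(2*fv)*g^2) ∧ cj / (1 + cj/(2*fv)*g^2) ≤ cj ∧
      cj - cj / (1 + cj/(2*fv)*g^2) ≤ Lj*cj^2 := by
  set q := cj/(2*fv)*g^2 with hqdef
  have hcL' : cj * Lj ≤ 1/2 := by
    rw [le_div_iff₀ (by positivity)] at hcL
    nlinarith
  have hq3 : 0 ≤ q ∧ q ≤ cj * Lj := by
    rcases eq_or_lt_of_le hf with h0 | hpos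
    · have hg2 : g^2 = 0 := le_antisymm (by rw [← h0] at hg; linarith) (sq_nonneg g)
      constructor <;> simp [hqdef, hg2] <;> positivity
    · constructor
      · positivity
      · have : cj/(2*fv)*g^2 ≤ cj/(2*fv)*(2*Lj*fv) :=
          mul_le_mul_of_nonneg_left hg (by positivity)
        have e : cj/(2*fv)*(2*Lj*fv) = cj * Lj := by field_simp
        rw [hqdef]; rw [e] at this; exact this
  obtain ⟨hq0, hqc⟩ := hq3
  have hq2 : q ≤ 1/2 := le_trans hqc hcL'
  have hd1 : (1:ℝ) ≤ 1 + q := by linarith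
  have hd0 : (0:ℝ) < 1 + q := by linarith
  refine ⟨?_, ?_, ?_⟩
  · calc 2/3*cj = cj / (3/2) := by ring
      _ ≤ cj / (1 + q) := by gcongr; linarith
  · calc cj / (1+q) ≤ cj / 1 := by gcongr
      _ = cj := by ring
  · have e : cj - cj/(1+q) = cj*q/(1+q) := by field_simp; ring
    rw [e]
    calc cj*q/(1+q) ≤ cj*q/1 := by gcongr
      _ = cj*q := by ring
      _ ≤ cj*(cj*Lj) := mul_le_mul_of_nonneg_left hqc hc.le
      _ = Lj*cj^2 := by ring

lemma ngn_coord_descent {m : ℕ} (hm : 0 < m) (G : ℝ) (gi γi : Fin m → ℝ)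
    (cj Lj sj : ℝ) (hc : 0 < cj) (hL : 0 < Lj) (hcL' : cj * Lj ≤ 1/2)
    (hγ0 : ∀ i, 0 ≤ γi i) (hγu : ∀ i, γi i ≤ cj) (hγd : ∀ i, cj - γi i ≤ Lj*cj^2)
    (hmean : (∑ i, gi i) / m = G) (hvar : (∑ i, (gi i - G)^2)/m ≤ sj^2) :
    (∑ i, (-(γi i) * G * gi i + 1/2 * Lj * (γi i)^2 * (gi i)^2)) / m
      ≤ -(cj/12) * G^2 + 3/2 * Lj * cj^2 * sj^2 := by
  have hm' : (0:ℝ) < m := by exact_mod_cast hm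
  have hsum : ∑ i, gi i = m * G := by
    field_simp at hmean; linarith [hmean]
  have hvar' : ∑ i, (gi i - G)^2 ≤ m * sj^2 := by
    rw [div_le_iff₀ hm'] at hvar; linarith [hvar]
  have hid : ∑ i, (gi i - G)^2 = (∑ i, (gi i)^2) - (m:ℝ) * G^2 := by
    have : ∀ i : Fin m, (gi i - G)^2 = (gi i)^2 - 2*G*(gi i) + G^2 := fun i => by ring
    rw [Finset.sum_congr rfl (fun i _ => this i), Finset.sum_add_distrib,
      Finset.sum_sub_distrib, ← Finset.mul_sum, hsum, Finset.sum_const]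
    simp; ring
  have hsq : ∑ i, (gi i)^2 ≤ (m:ℝ)*G^2 + (m:ℝ)*sj^2 := by linarith
  have key : ∀ i : Fin m, -(γi i) * G * gi i + 1/2 * Lj * (γi i)^2 * (gi i)^2
      ≤ -cj*G*(gi i) + 1/2*Lj*cj^2*G^2 + Lj*cj^2*(gi i)^2 := by
    intro i
    have h1 := hγ0 i; have h2 := hγu i; have h3 := hγd i
    have hq : 1/2*Lj*(γi i)^2*(gi i)^2 ≤ 1/2*Lj*cj^2*(gi i)^2 := by
      have : (γi i)^2 ≤ cj^2 := by nlinarith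
      have h' : 0 ≤ 1/2*Lj*(gi i)^2 := by positivity
      nlinarith
    have hb : (cj - γi i) * (G * gi i) ≤ Lj*cj^2 * (1/2*G^2 + 1/2*(gi i)^2) := by
      rcases le_or_gt 0 (G * gi i) with hpos | hneg
      · calc (cj - γi i) * (G * gi i) ≤ (Lj*cj^2) * (G * gi i) :=
              mul_le_mul_of_nonneg_right h3 hpos
          _ ≤ Lj*cj^2 * (1/2*G^2 + 1/2*(gi i)^2) := by
              apply mul_le_mul_of_nonneg_left _ (by positivity)
              nlinarith [sq_nonneg (G - gi i)]
      · have hn : (cj - γi i) * (G * gi i) ≤ 0 :=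
          mul_nonpos_of_nonneg_of_nonpos (sub_nonneg.mpr h2) hneg.le
        have : (0:ℝ) ≤ Lj*cj^2 * (1/2*G^2 + 1/2*(gi i)^2) := by positivity
        linarith
    have e : -(γi i) * G * gi i = -cj*G*(gi i) + (cj - γi i)*(G*gi i) := by ring
    linarith [hq, hb]
  have e1 : ∑ i : Fin m, (-cj*G*(gi i) + 1/2*Lj*cj^2*G^2 + Lj*cj^2*(gi i)^2)
      = (-cj*G)*(∑ i, gi i) + (m:ℝ)*(1/2*Lj*cj^2*G^2) + Lj*cj^2*(∑ i, (gi i)^2) := by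
    rw [Finset.sum_add_distrib, Finset.sum_add_distrib, Finset.sum_const,
      Finset.card_univ, Fintype.card_fin, nsmul_eq_mul, ← Finset.mul_sum, ← Finset.mul_sum]
  have hs : ∑ i, (-(γi i) * G * gi i + 1/2 * Lj * (γi i)^2 * (gi i)^2)
      ≤ (m:ℝ) * (-(cj/12) * G^2 + 3/2 * Lj * cj^2 * sj^2) := by
    calc ∑ i, (-(γi i) * G * gi i + 1/2 * Lj * (γi i)^2 * (gi i)^2)
        ≤ ∑ i : Fin m, (-cj*G*(gi i) + 1/2*Lj*cj^2*G^2 + Lj*cj^2*(gi i)^2) :=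
          Finset.sum_le_sum (fun i _ => key i)
      _ = (-cj*G)*((m:ℝ)*G) + (m:ℝ)*(1/2*Lj*cj^2*G^2) + Lj*cj^2*(∑ i, (gi i)^2) := by
          rw [e1, hsum]
      _ ≤ (-cj*G)*((m:ℝ)*G) + (m:ℝ)*(1/2*Lj*cj^2*G^2) + Lj*cj^2*((m:ℝ)*G^2 + (m:ℝ)*sj^2) := by
          have : (0:ℝ) ≤ Lj*cj^2 := by positivity
          nlinarith [mul_le_mul_of_nonneg_left hsq this]
      _ = (m:ℝ) * (-cj*G^2 + 3/2*Lj*cj^2*G^2 + Lj*cj^2*sj^2) := by ring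
      _ ≤ (m:ℝ) * (-(cj/12) * G^2 + 3/2 * Lj * cj^2 * sj^2) := by
          apply mul_le_mul_of_nonneg_left _ hm'.le
          have a1 : (0:ℝ) ≤ Lj*cj^2*sj^2 :=
            mul_nonneg (mul_nonneg hL.le (sq_nonneg cj)) (sq_nonneg sj)
          have a2 : cj*Lj*G^2 ≤ 1/2*G^2 := mul_le_mul_of_nonneg_right hcL' (sq_nonneg G)
          have a3 : 3/2*cj*(cj*Lj*G^2) ≤ 3/2*cj*(1/2*G^2) :=
            mul_le_mul_of_nonneg_left a2 (by positivity)
          have a4 : (0:ℝ) ≤ cj*G^2 := mul_nonneg hc.le (sq_nonneg G)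
          linarith [a1, a3, a4]
  rw [div_le_iff₀ hm']
  linarith [hs]

/-- NGN-D convergence in the general non-convex setting. Batches are sampled
uniformly from a finite family `fS : Fin m → _`; `X k s` is the iterate after `k`
steps along the sample path `s`, and expectations are averages over all paths. -/
theorem ngn_d_nonconvex_convergence {d m : ℕ} (hm : 0 < m)
    (fS : Fin m → EuclideanSpace ℝ (Fin d) → ℝ)
    (gS : Fin m → EuclideanSpace ℝ (Fin d) → EuclideanSpace ℝ (Fin d))
    (f : EuclideanSpace ℝ (Fin d) → ℝ)
    (gf : EuclideanSpace ℝ (Fin d) → EuclideanSpace ℝ (Fin d))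
    (hf : ∀ x, f x = (∑ i, fS i x) / m)
    (hgS : ∀ i x, HasGradientAt (fS i) (gS i x) x)
    (hgf : ∀ x, HasGradientAt f (gf x) x)
    (hnonneg : ∀ i x, 0 ≤ fS i x)
    (L : Fin d → ℝ) (hL : ∀ j, 0 < L j)
    (hsmooth : ∀ i x h, fS i (x + h) ≤ fS i x + ⟪gS i x, h⟫ + (1/2) * ∑ j, L j * (h j) ^ 2)
    (σ : Fin d → ℝ)
    (hvar : ∀ x j, (∑ i, (gS i x j - gf x j) ^ 2) / m ≤ σ j ^ 2)
    (c : Fin d → ℝ) (hc : ∀ j, 0 < c j) (hcL : ∀ j, c j ≤ 1 / (2 * L j))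
    (cmin : ℝ) (hcmin : IsLeast (Set.range c) cmin)
    (fstar : ℝ) (hfstar : ∀ x, fstar ≤ f x)
    (x0 : EuclideanSpace ℝ (Fin d))
    (X : ∀ k : ℕ, (Fin k → Fin m) → EuclideanSpace ℝ (Fin d))
    (hX0 : ∀ s, X 0 s = x0)
    (hXs : ∀ (k : ℕ) (s : Fin (k + 1) → Fin m) (j : Fin d),
      X (k + 1) s j =
        X k (fun i => s i.castSucc) j -
          (c j / (1 + c j / (2 * fS (s (Fin.last k)) (X k (fun i => s i.castSucc))) *
              (gS (s (Fin.last k)) (X k (fun i => s i.castSucc)) j) ^ 2)) *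
            gS (s (Fin.last k)) (X k (fun i => s i.castSucc)) j)
    (K : ℕ) (hK : 0 < K) :
    ∃ k < K, (∑ s : Fin k → Fin m, ‖gf (X k s)‖ ^ 2) / (m : ℝ) ^ k ≤
      12 * (f x0 - fstar) / (cmin * K) +
        (1 / cmin) * ∑ j, 18 * L j * (c j) ^ 2 * (σ j) ^ 2 := by
  classical
  have hm' : (0:ℝ) < m := by exact_mod_cast hm
  obtain ⟨j0, hj0⟩ := hcmin.1
  have hcmin_pos : 0 < cmin := hj0 ▸ hc j0
  have hcmin_le : ∀ j, cmin ≤ c j := fun j => hcmin.2 ⟨j, rfl⟩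
  set C : ℝ := ∑ j, 3/2 * L j * (c j)^2 * (σ j)^2 with hC
  -- the gradient of f is the average of the stochastic gradients
  have hgf_eq : ∀ x, gf x = (m:ℝ)⁻¹ • ∑ i, gS i x := by
    intro x
    have h1 : HasFDerivAt (fun y => ∑ i, fS i y)
        (∑ i, (InnerProductSpace.toDual ℝ (EuclideanSpace ℝ (Fin d))) (gS i x)) x :=
      HasFDerivAt.fun_sum fun i _ => (hgS i x).hasFDerivAt
    have h2 : HasFDerivAt f ((m:ℝ)⁻¹ • ∑ i,
        (InnerProductSpace.toDual ℝ (EuclideanSpace ℝ (Fin d))) (gS i x)) x := by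
      have e : f = fun y => (m:ℝ)⁻¹ • ∑ i, fS i y := by
        funext y; rw [hf]; simp [div_eq_inv_mul]
      rw [e]
      exact h1.fun_const_smul _
    have h3 : HasGradientAt f ((m:ℝ)⁻¹ • ∑ i, gS i x) x := by
      rw [hasGradientAt_iff_hasFDerivAt, map_smul, map_sum]
      exact h2
    exact (hgf x).unique h3
  have hsum_apply : ∀ {n : ℕ} (g : Fin n → EuclideanSpace ℝ (Fin d)) (j : Fin d),
      (∑ i, g i) j = ∑ i, g i j := by
    intro n g j
    induction (Finset.univ : Finset (Fin n)) using Finset.induction with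
    | empty => rfl
    | insert _ _ h ih => rw [Finset.sum_insert h, Finset.sum_insert h, PiLp.add_apply, ih]
  have hgfj : ∀ x j, (∑ i, gS i x j)/m = gf x j := by
    intro x j
    rw [hgf_eq x, PiLp.smul_apply, hsum_apply, smul_eq_mul, div_eq_inv_mul]
  have hnorm : ∀ x : EuclideanSpace ℝ (Fin d), ‖x‖^2 = ∑ j, (x j)^2 := by
    intro x
    rw [← real_inner_self_eq_norm_sq, PiLp.inner_apply]
    simp [RCLike.inner_apply, conj_trivial, sq]
  -- coordinatewise self-bounding property
  have hgb : ∀ i x j, (gS i x j)^2 ≤ 2 * L j * fS i x := by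
    intro i x j
    have key := hsmooth i x (EuclideanSpace.single j (-(gS i x j) / L j))
    have hLj := hL j
    have h1 : ⟪gS i x, EuclideanSpace.single j (-(gS i x j) / L j)⟫ = -(gS i x j)^2 / L j := by
      rw [EuclideanSpace.inner_single_right]; simp; ring
    have h2 : ∑ k, L k * (EuclideanSpace.single j (-(gS i x j) / L j) k) ^ 2
        = (gS i x j)^2 / L j := by
      rw [Finset.sum_eq_single j]
      · rw [EuclideanSpace.single_apply]; simp; field_simp
      · intro k _ hk; rw [EuclideanSpace.single_apply]; simp [hk]
      · simp
    have h0 := hnonneg i (x + EuclideanSpace.single j (-(gS i x j) / L j))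
    rw [h1, h2] at key
    have h3 : 0 ≤ fS i x + -(gS i x j)^2 / L j + 1/2 * ((gS i x j)^2 / L j) :=
      le_trans h0 key
    set t := (gS i x j)^2 / L j with ht
    have e : (gS i x j)^2 = t * L j := by rw [ht]; field_simp
    rw [show -(gS i x j)^2 / L j = -t by rw [ht, neg_div]] at h3
    have h4 : t ≤ 2 * fS i x := by linarith
    rw [e]
    calc t * L j ≤ 2 * fS i x * L j := mul_le_mul_of_nonneg_right h4 hLj.le
      _ = 2 * L j * fS i x := by ring
  -- step sizes
  set γ : Fin m → EuclideanSpace ℝ (Fin d) → Fin d → ℝ :=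
    fun i x j => c j / (1 + c j / (2 * fS i x) * (gS i x j)^2) with hγdef
  have hγb : ∀ i x j, 2/3*(c j) ≤ γ i x j ∧ γ i x j ≤ c j ∧
      c j - γ i x j ≤ L j * (c j)^2 := fun i x j =>
    ngn_step_bounds (c j) (L j) (fS i x) (gS i x j) (hc j) (hL j) (hcL j)
      (hnonneg i x) (hgb i x j)
  have hγ0 : ∀ i x j, 0 ≤ γ i x j := fun i x j =>
    le_trans (by linarith [hc j]) (hγb i x j).1
  -- the update map
  set step : Fin m → EuclideanSpace ℝ (Fin d) → EuclideanSpace ℝ (Fin d) :=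
    fun i x => WithLp.toLp 2 (fun j => x j - γ i x j * gS i x j) with hstepdef
  have hXstep : ∀ (k : ℕ) (s : Fin (k+1) → Fin m),
      X (k+1) s = step (s (Fin.last k)) (X k (fun i => s i.castSucc)) := by
    intro k s
    ext j
    exact hXs k s j
  -- smoothness of f
  have hfsmooth : ∀ x h, f (x + h) ≤ f x + ⟪gf x, h⟫ + (1/2) * ∑ j, L j * (h j)^2 := by
    intro x h
    have h2 := Finset.sum_le_sum (fun i (_ : i ∈ Finset.univ) => hsmooth i x h)
    have e : (∑ i, (fS i x + ⟪gS i x, h⟫ + (1/2) * ∑ j, L j * (h j)^2))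
        = (∑ i, fS i x) + (∑ i, ⟪gS i x, h⟫) + (m:ℝ)*((1/2) * ∑ j, L j * (h j)^2) := by
      rw [Finset.sum_add_distrib, Finset.sum_add_distrib, Finset.sum_const,
        Finset.card_univ, Fintype.card_fin, nsmul_eq_mul]
    have einner : ⟪gf x, h⟫ = (m:ℝ)⁻¹ * ∑ i, ⟪gS i x, h⟫ := by
      rw [hgf_eq x, real_inner_smul_left, sum_inner]
    calc f (x + h) = (∑ i, fS i (x+h))/m := hf _
      _ ≤ ((∑ i, fS i x) + (∑ i, ⟪gS i x, h⟫) + (m:ℝ)*((1/2) * ∑ j, L j * (h j)^2))/m := by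
          rw [← e]; gcongr
      _ = (∑ i, fS i x)/m + (m:ℝ)⁻¹ * (∑ i, ⟪gS i x, h⟫) + (1/2) * ∑ j, L j * (h j)^2 := by
          field_simp
      _ = f x + ⟪gf x, h⟫ + (1/2) * ∑ j, L j * (h j)^2 := by
          rw [← hf x, ← einner]
  -- expected one-step descent
  have hdesc : ∀ x : EuclideanSpace ℝ (Fin d),
      (∑ i, f (step i x))/m ≤ f x - cmin/12 * ‖gf x‖^2 + C := by
    intro x
    have hper : ∀ i, f (step i x) ≤ f x +
        ∑ j, (-(γ i x j) * (gf x j) * gS i x j + 1/2 * L j * (γ i x j)^2 * (gS i x j)^2) := by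
      intro i
      have hcoord : ∀ j, (step i x - x) j = -(γ i x j * gS i x j) := by
        intro j
        rw [PiLp.sub_apply]
        show x j - γ i x j * gS i x j - x j = _
        ring
      have h0 := hfsmooth x (step i x - x)
      rw [add_sub_cancel] at h0
      have einner : ⟪gf x, step i x - x⟫ = ∑ j, gf x j * (-(γ i x j * gS i x j)) := by
        rw [PiLp.inner_apply]
        exact Finset.sum_congr rfl fun j _ => by
          rw [hcoord j]; simp [RCLike.inner_apply, conj_trivial]; ring
      have equad : ∀ j, L j * ((step i x - x) j)^2 = L j * (γ i x j * gS i x j)^2 := by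
        intro j; rw [hcoord j]; ring
      rw [einner] at h0
      calc f (step i x) ≤ f x + (∑ j, gf x j * (-(γ i x j * gS i x j)))
            + (1/2) * ∑ j, L j * ((step i x - x) j)^2 := h0
        _ = f x + ∑ j, (-(γ i x j) * (gf x j) * gS i x j
              + 1/2 * L j * (γ i x j)^2 * (gS i x j)^2) := by
            rw [Finset.sum_congr rfl (fun j _ => equad j), Finset.mul_sum,
              add_assoc, ← Finset.sum_add_distrib]
            congr 1
            exact Finset.sum_congr rfl fun j _ => by ring
    have h3 : ∀ j, (∑ i, (-(γ i x j) * (gf x j) * gS i x j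
        + 1/2 * L j * (γ i x j)^2 * (gS i x j)^2))/m
          ≤ -(c j/12)*(gf x j)^2 + 3/2 * L j * (c j)^2 * (σ j)^2 := by
      intro j
      have hcL' : c j * L j ≤ 1/2 := by
        have := hcL j
        rw [le_div_iff₀ (by linarith [hL j])] at this
        nlinarith
      exact ngn_coord_descent hm (gf x j) (fun i => gS i x j) (fun i => γ i x j)
        (c j) (L j) (σ j) (hc j) (hL j) hcL' (fun i => hγ0 i x j)
        (fun i => (hγb i x j).2.1) (fun i => (hγb i x j).2.2)
        (hgfj x j) (hvar x j)
    have h4 : ∀ j, -(c j/12)*(gf x j)^2 ≤ -(cmin/12)*(gf x j)^2 := by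
      intro j
      have := mul_le_mul_of_nonneg_right (hcmin_le j) (sq_nonneg (gf x j))
      nlinarith [this]
    calc (∑ i, f (step i x))/m
        ≤ (∑ i, (f x + ∑ j, (-(γ i x j) * (gf x j) * gS i x j
            + 1/2 * L j * (γ i x j)^2 * (gS i x j)^2)))/m := by
          have hle := Finset.sum_le_sum fun i (_ : i ∈ Finset.univ) => hper i
          exact div_le_div_of_nonneg_right hle hm'.le
      _ = f x + ∑ j, (∑ i, (-(γ i x j) * (gf x j) * gS i x j
            + 1/2 * L j * (γ i x j)^2 * (gS i x j)^2))/(m:ℝ) := by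
          have e2 : ∑ i, (f x + ∑ j, (-(γ i x j) * (gf x j) * gS i x j
              + 1/2 * L j * (γ i x j)^2 * (gS i x j)^2))
              = (m:ℝ) * f x + ∑ j, ∑ i, (-(γ i x j) * (gf x j) * gS i x j
                + 1/2 * L j * (γ i x j)^2 * (gS i x j)^2) := by
            rw [Finset.sum_add_distrib, Finset.sum_const, Finset.card_univ,
              Fintype.card_fin, nsmul_eq_mul, Finset.sum_comm]
          rw [e2, add_div, mul_div_cancel_left₀ _ (ne_of_gt hm'), Finset.sum_div]
      _ ≤ f x + ∑ j, (-(cmin/12)*(gf x j)^2 + 3/2 * L j * (c j)^2 * (σ j)^2) := by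
          have hle : ∀ j : Fin d, (∑ i, (-(γ i x j) * (gf x j) * gS i x j
              + 1/2 * L j * (γ i x j)^2 * (gS i x j)^2))/(m:ℝ)
                ≤ -(cmin/12)*(gf x j)^2 + 3/2 * L j * (c j)^2 * (σ j)^2 :=
            fun j => le_trans (h3 j) (by linarith [h4 j])
          have := Finset.sum_le_sum fun j (_ : j ∈ Finset.univ) => hle j
          linarith
      _ = f x - cmin/12 * ‖gf x‖^2 + C := by
          rw [Finset.sum_add_distrib, hC, hnorm, Finset.mul_sum]
          rw [show ∑ j, -(cmin/12)*(gf x j)^2 = -∑ j, cmin/12 * (gf x j)^2 by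
            rw [← Finset.sum_neg_distrib]
            exact Finset.sum_congr rfl fun j _ => by ring]
          ring
  -- expectation sequences
  set F : ℕ → ℝ := fun k => (∑ s : Fin k → Fin m, f (X k s)) / (m:ℝ)^k with hF
  set Gq : ℕ → ℝ := fun k => (∑ s : Fin k → Fin m, ‖gf (X k s)‖^2) / (m:ℝ)^k with hGq
  have hmpow : ∀ k : ℕ, (0:ℝ) < (m:ℝ)^k := fun k => pow_pos hm' k
  have hsplit : ∀ (k : ℕ) (h : (Fin (k+1) → Fin m) → ℝ),
      ∑ s : Fin (k+1) → Fin m, h s =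
        ∑ t : Fin k → Fin m, ∑ i : Fin m, h (Fin.insertNth (Fin.last k) i t) := by
    intro k h
    rw [← Equiv.sum_comp (Fin.insertNthEquiv (fun _ => Fin m) (Fin.last k)) h,
      Fintype.sum_prod_type, Finset.sum_comm]
    rfl
  have hins1 : ∀ (k : ℕ) (i : Fin m) (t : Fin k → Fin m),
      (fun j : Fin k => Fin.insertNth (α := fun _ => Fin m) (Fin.last k) i t j.castSucc) = t := by
    intro k i t
    funext j
    rw [← Fin.succAbove_last, Fin.insertNth_apply_succAbove]
  have hrec : ∀ k, F (k+1) ≤ F k - cmin/12 * Gq k + C := by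
    intro k
    have hsp : ∑ s : Fin (k+1) → Fin m, f (X (k+1) s)
        = ∑ t : Fin k → Fin m, ∑ i : Fin m, f (step i (X k t)) := by
      rw [hsplit k (fun s => f (X (k+1) s))]
      refine Finset.sum_congr rfl fun t _ => Finset.sum_congr rfl fun i _ => ?_
      have e1 : Fin.insertNth (α := fun _ => Fin m) (Fin.last k) i t (Fin.last k) = i :=
        Fin.insertNth_apply_same _ _ _
      rw [hXstep k _, e1, hins1 k i t]
    show (∑ s : Fin (k+1) → Fin m, f (X (k+1) s)) / (m:ℝ)^(k+1) ≤ _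
    have e3 : ((m:ℝ))^(k+1) = (m:ℝ) * (m:ℝ)^k := by ring
    rw [hsp, e3]
    calc (∑ t : Fin k → Fin m, ∑ i : Fin m, f (step i (X k t))) / ((m:ℝ) * (m:ℝ)^k)
        = (∑ t : Fin k → Fin m, (∑ i : Fin m, f (step i (X k t)))/(m:ℝ)) / (m:ℝ)^k := by
          rw [← Finset.sum_div, div_div]
      _ ≤ (∑ t : Fin k → Fin m, (f (X k t) - cmin/12 * ‖gf (X k t)‖^2 + C)) / (m:ℝ)^k := by
          have hle := Finset.sum_le_sum fun t (_ : t ∈ Finset.univ) => hdesc (X k t)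
          exact div_le_div_of_nonneg_right hle (hmpow k).le
      _ = F k - cmin/12 * Gq k + C := by
          rw [Finset.sum_add_distrib, Finset.sum_sub_distrib, ← Finset.mul_sum,
            Finset.sum_const, Finset.card_univ]
          have hcard : Fintype.card (Fin k → Fin m) = m^k := by simp
          rw [hcard, nsmul_eq_mul]
          push_cast
          rw [add_div, sub_div, mul_div_assoc,
            mul_div_cancel_left₀ _ (ne_of_gt (hmpow k))]
  have htel : ∀ N : ℕ, cmin/12 * (∑ k ∈ Finset.range N, Gq k) ≤ F 0 - F N + N * C := by
    intro N
    induction N with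
    | zero => simp
    | succ n ih =>
      rw [Finset.sum_range_succ, mul_add]
      have := hrec n
      push_cast
      linarith
  have hF0 : F 0 = f x0 := by
    rw [hF]
    simp [hX0]
  have hFK : fstar ≤ F K := by
    rw [hF, le_div_iff₀ (hmpow K)]
    calc fstar * (m:ℝ)^K = ∑ _s : Fin K → Fin m, fstar := by
          rw [Finset.sum_const, Finset.card_univ]
          have : Fintype.card (Fin K → Fin m) = m^K := by simp
          rw [this, nsmul_eq_mul]
          push_cast
          ring
      _ ≤ ∑ s : Fin K → Fin m, f (X K s) := Finset.sum_le_sum fun s _ => hfstar _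
  obtain ⟨k0, hk0mem, hk0min⟩ := Finset.exists_min_image (Finset.range K) Gq
    ⟨0, Finset.mem_range.mpr hK⟩
  refine ⟨k0, Finset.mem_range.mp hk0mem, ?_⟩
  have hKR : (0:ℝ) < K := by exact_mod_cast hK
  have hmin : (K:ℝ) * Gq k0 ≤ ∑ k ∈ Finset.range K, Gq k := by
    calc (K:ℝ) * Gq k0 = ∑ _k ∈ Finset.range K, Gq k0 := by
          rw [Finset.sum_const, Finset.card_range, nsmul_eq_mul]
      _ ≤ ∑ k ∈ Finset.range K, Gq k := Finset.sum_le_sum fun k hk => hk0min k hk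
  have hmain : cmin/12 * ((K:ℝ) * Gq k0) ≤ (f x0 - fstar) + K * C := by
    have h1 := htel K
    have h2 : cmin/12 * ((K:ℝ) * Gq k0) ≤ cmin/12 * ∑ k ∈ Finset.range K, Gq k :=
      mul_le_mul_of_nonneg_left hmin (by positivity)
    have h3 : F 0 - F K ≤ f x0 - fstar := by rw [hF0]; linarith [hFK]
    linarith
  have hC18 : ∑ j, 18 * L j * (c j)^2 * (σ j)^2 = 12 * C := by
    rw [hC, Finset.mul_sum]
    exact Finset.sum_congr rfl fun j _ => by ring
  show Gq k0 ≤ _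
  rw [hC18]
  have h1 : Gq k0 ≤ (f x0 - fstar + K*C) * 12 / (cmin * K) := by
    rw [le_div_iff₀ (mul_pos hcmin_pos hKR)]
    linarith only [hmain]
  calc Gq k0 ≤ (f x0 - fstar + K*C) * 12 / (cmin * K) := h1
    _ = 12 * (f x0 - fstar) / (cmin * K) + (12*C) * K / (cmin * K) := by
        rw [show (f x0 - fstar + K*C) * 12 = 12*(f x0 - fstar) + (12*C)*K by ring,
          add_div]
    _ = 12 * (f x0 - fstar) / (cmin * K) + (1/cmin) * (12 * C) := by
        rw [mul_div_mul_right _ _ (ne_of_gt hKR), one_div, inv_mul_eq_div]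
end

section
/- Under the assumptions of NGN-D convergence plus the Polyak–Łojasiewicz condition ‖∇f(x)‖² ≥ 2μ(f(x) − f*), if additionally c_j ≤ min{1/(2L_j), 6/μ} for all j, then E[f(x^K) − f*] ≤ (1 − μ c_min/6)^K (f(x^0) − f*) + (9/(μ c_min)) Σ_{j=1}^d L_j c_j² σ_j². -/
open RealInnerProductSpace

lemma ngn_gam_bounds (L c F g : ℝ) (hc : 0 < c)
    (hF : 0 ≤ F) (hg : g^2 ≤ 2 * L * F) (hL : 0 < L) :
    0 ≤ c / (1 + c / (2*F) * g^2) ∧ c / (1 + c / (2*F) * g^2) ≤ c ∧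
      c - c / (1 + c / (2*F) * g^2) ≤ L * c^2 := by
  rcases eq_or_lt_of_le hF with hF0 | hF0
  · have hg0 : g = 0 := by nlinarith [sq_nonneg g]
    rw [← hF0]
    simp [hg0, hc.le]
    positivity
  · set q := c / (2*F) * g^2 with hq
    have hq0 : 0 ≤ q := by positivity
    have hqle : q ≤ c * L := by
      rw [hq, div_mul_eq_mul_div, div_le_iff₀ (by linarith)]
      nlinarith
    have h1 : (0:ℝ) < 1 + q := by linarith
    refine ⟨by positivity, ?_, ?_⟩
    · rw [div_le_iff₀ h1]; nlinarith
    · have he : c - c / (1 + q) = c * q / (1 + q) := by field_simp; ring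
      rw [he, div_le_iff₀ h1]
      nlinarith [mul_le_mul_of_nonneg_left hqle hc.le,
        mul_nonneg (mul_nonneg hL.le (sq_nonneg c)) hq0]

lemma ngn_step_coord (L c F g w : ℝ) (hc : 0 < c)
    (hF : 0 ≤ F) (hg : g^2 ≤ 2 * L * F) (hL : 0 < L) :
    w * (-(c / (1 + c / (2*F) * g^2) * g)) + (1/2) * (L * (-(c / (1 + c / (2*F) * g^2) * g))^2)
      ≤ (-(c * w)) * g + (L * c^2) * g^2 + L * c^2 / 2 * w^2 := by
  obtain ⟨h1, h2, h3⟩ := ngn_gam_bounds L c F g hc hF hg hL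
  set γ := c / (1 + c / (2*F) * g^2) with hγ
  have key : (c - γ) * (g * w) ≤ L*c^2*((1/2)*g^2 + (1/2)*w^2) := by
    nlinarith [mul_nonneg (sub_nonneg.2 h2) (sq_nonneg (g - w)),
      mul_nonneg (sub_nonneg.2 h2) (sq_nonneg (g + w)),
      mul_nonneg (sub_nonneg.2 h3) (by positivity : (0:ℝ) ≤ g^2 + w^2)]
  have h5 : γ^2 ≤ c^2 := by nlinarith
  nlinarith [key, mul_nonneg (mul_nonneg hL.le (sq_nonneg g)) (sub_nonneg.2 h5)]

lemma ngn_sum_j_bound (L c cmin σ W S M : ℝ) (hM : 0 ≤ M) (hc : 0 < c) (hL : 0 < L)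
    (hcL : c * L ≤ 1/2) (hcm : cmin ≤ c) (hS : S ≤ M*σ^2 + M*W^2) :
    (-(c*W))*(M*W) + (L*c^2)*S + M*(L*c^2/2*W^2) ≤ M*(-(cmin/4)*W^2 + L*c^2*σ^2) := by
  nlinarith [mul_le_mul_of_nonneg_left hS (by positivity : (0:ℝ) ≤ L*c^2),
    mul_nonneg (mul_nonneg hM (sq_nonneg W)) (sub_nonneg.2 hcm),
    mul_nonneg (mul_nonneg hM (sq_nonneg W))
      (by nlinarith : (0:ℝ) ≤ 3/4*c - 3/2*(L*c^2))]

set_option maxHeartbeats 2000000 in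
/-- NGN-D convergence under the Polyak–Łojasiewicz condition. -/
theorem ngn_d_pl_convergence {d m : ℕ} (hm : 0 < m)
    (fS : Fin m → EuclideanSpace ℝ (Fin d) → ℝ)
    (gS : Fin m → EuclideanSpace ℝ (Fin d) → EuclideanSpace ℝ (Fin d))
    (f : EuclideanSpace ℝ (Fin d) → ℝ)
    (gf : EuclideanSpace ℝ (Fin d) → EuclideanSpace ℝ (Fin d))
    (hf : ∀ x, f x = (∑ i, fS i x) / m)
    (hgS : ∀ i x, HasGradientAt (fS i) (gS i x) x)
    (hgf : ∀ x, HasGradientAt f (gf x) x)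
    (hnonneg : ∀ i x, 0 ≤ fS i x)
    (L : Fin d → ℝ) (hL : ∀ j, 0 < L j)
    (hsmooth : ∀ i x h, fS i (x + h) ≤ fS i x + ⟪gS i x, h⟫ + (1/2) * ∑ j, L j * (h j) ^ 2)
    (σ : Fin d → ℝ)
    (hvar : ∀ x j, (∑ i, (gS i x j - gf x j) ^ 2) / m ≤ σ j ^ 2)
    (fstar : ℝ) (hfstar : ∀ x, fstar ≤ f x)
    (μ : ℝ) (hμ : 0 < μ)
    (hPL : ∀ x, ‖gf x‖ ^ 2 ≥ 2 * μ * (f x - fstar))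
    (c : Fin d → ℝ) (hc : ∀ j, 0 < c j)
    (hcL : ∀ j, c j ≤ min (1 / (2 * L j)) (6 / μ))
    (cmin : ℝ) (hcmin : IsLeast (Set.range c) cmin)
    (x0 : EuclideanSpace ℝ (Fin d))
    (X : ∀ k : ℕ, (Fin k → Fin m) → EuclideanSpace ℝ (Fin d))
    (hX0 : ∀ s, X 0 s = x0)
    (hXs : ∀ (k : ℕ) (s : Fin (k + 1) → Fin m) (j : Fin d),
      X (k + 1) s j =
        X k (fun i => s i.castSucc) j -
          (c j / (1 + c j / (2 * fS (s (Fin.last k)) (X k (fun i => s i.castSucc))) *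
              (gS (s (Fin.last k)) (X k (fun i => s i.castSucc)) j) ^ 2)) *
            gS (s (Fin.last k)) (X k (fun i => s i.castSucc)) j)
    (K : ℕ) :
    (∑ s : Fin K → Fin m, (f (X K s) - fstar)) / (m : ℝ) ^ K ≤
      (1 - μ * cmin / 6) ^ K * (f x0 - fstar) +
        (9 / (μ * cmin)) * ∑ j, L j * (c j) ^ 2 * (σ j) ^ 2 := by
  have hm' : (0:ℝ) < m := by exact_mod_cast hm
  obtain ⟨j0, hj0⟩ := hcmin.1
  have hcmin_pos : 0 < cmin := hj0 ▸ hc j0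
  have hcmin_le : ∀ j, cmin ≤ c j := fun j => hcmin.2 ⟨j, rfl⟩
  have hμc : μ * cmin ≤ 6 := by
    have h1 : c j0 ≤ 6 / μ := (hcL j0).trans (min_le_right _ _)
    rw [le_div_iff₀ hμ] at h1
    nlinarith [hj0 ▸ h1]
  have hcLhalf : ∀ j, c j * L j ≤ 1/2 := by
    intro j
    have h1 : c j ≤ 1 / (2 * L j) := (hcL j).trans (min_le_left _ _)
    have hLj := hL j
    rw [le_div_iff₀ (by linarith : (0:ℝ) < 2 * L j)] at h1
    linarith
  set ρ : ℝ := 1 - μ * cmin / 6 with hρ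
  have hρ0 : 0 ≤ ρ := by rw [hρ]; linarith
  have hρ1 : ρ < 1 := by rw [hρ]; nlinarith
  set B : ℝ := ∑ j, L j * (c j)^2 * (σ j)^2 with hB
  have hB0 : 0 ≤ B := Finset.sum_nonneg fun j _ => mul_nonneg (mul_nonneg (hL j).le (sq_nonneg _)) (sq_nonneg _)
  -- gradient of f is the average gradient
  have hgfavg : ∀ x, gf x = (m : ℝ)⁻¹ • ∑ i, gS i x := by
    intro x
    have h1 : HasGradientAt f ((m : ℝ)⁻¹ • ∑ i, gS i x) x := by
      rw [hasGradientAt_iff_hasFDerivAt]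
      have h2 : HasFDerivAt f ((m:ℝ)⁻¹ • ∑ i, (InnerProductSpace.toDual ℝ _) (gS i x)) x := by
        have hfe : f = fun y => (m:ℝ)⁻¹ • ∑ i, fS i y := by
          funext y; rw [hf y]; simp [div_eq_inv_mul]
        rw [hfe]
        exact ((HasFDerivAt.fun_sum (fun i _ => (hgS i x).hasFDerivAt))).const_smul ((m:ℝ)⁻¹)
      rw [map_smulₛₗ, map_sum, conj_trivial]
      exact h2
    exact (hgf x).unique h1
  -- coordinate gradient bound from nonnegativity and smoothness
  have hgbd : ∀ i x (j : Fin d), (gS i x j)^2 ≤ 2 * L j * fS i x := by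
    intro i x j
    have h1 := hsmooth i x (EuclideanSpace.single j (-(gS i x j / L j)))
    have h2 := hnonneg i (x + EuclideanSpace.single j (-(gS i x j / L j)))
    have h3 : ⟪gS i x, EuclideanSpace.single j (-(gS i x j / L j))⟫
        = gS i x j * (-(gS i x j / L j)) := by
      simp [PiLp.inner_apply, RCLike.inner_apply, conj_trivial,
        EuclideanSpace.single_apply, Finset.mul_sum, mul_comm]
    have h4 : ∑ j', L j' * ((EuclideanSpace.single j (-(gS i x j / L j)) : EuclideanSpace ℝ (Fin d)) j')^2
        = L j * (gS i x j / L j)^2 := by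
      rw [Finset.sum_eq_single j]
      · simp [EuclideanSpace.single_apply]
      · intro b _ hb; simp [EuclideanSpace.single_apply, hb]
      · simp
    rw [h3, h4] at h1
    have hLj := hL j
    have : fS i x - (gS i x j)^2 / (2 * L j) ≥ 0 := by
      have hexp : gS i x j * (-(gS i x j / L j)) + 1/2 * (L j * (gS i x j / L j)^2)
          = -((gS i x j)^2 / (2 * L j)) := by field_simp; ring
      nlinarith [h1, h2]
    rw [ge_iff_le, sub_nonneg, div_le_iff₀ (by positivity : (0:ℝ) < 2 * L j)] at this
    linarith
  -- f inherits the smoothness inequality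
  have smoothf : ∀ x h, f (x + h) ≤ f x + ⟪gf x, h⟫ + (1/2) * ∑ j, L j * (h j)^2 := by
    intro x h
    have h3 : ⟪gf x, h⟫ = (∑ i, ⟪gS i x, h⟫) / m := by
      rw [hgfavg x, real_inner_smul_left, sum_inner, div_eq_inv_mul]
    rw [hf (x + h), hf x, h3]
    have h4 : ∑ i, fS i (x + h)
        ≤ ∑ i, (fS i x + ⟪gS i x, h⟫ + (1/2) * ∑ j, L j * (h j)^2) :=
      Finset.sum_le_sum fun i _ => hsmooth i x h
    have h5 : ∑ i, (fS i x + ⟪gS i x, h⟫ + (1/2) * ∑ j, L j * (h j)^2)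
        = ∑ i, fS i x + ∑ i, ⟪gS i x, h⟫ + m * ((1/2) * ∑ j, L j * (h j)^2) := by
      rw [Finset.sum_add_distrib, Finset.sum_add_distrib, Finset.sum_const,
        Finset.card_univ, Fintype.card_fin, nsmul_eq_mul]
    calc (∑ i, fS i (x+h))/(m:ℝ)
        ≤ (∑ i, fS i x + ∑ i, ⟪gS i x, h⟫ + m * ((1/2) * ∑ j, L j * (h j)^2))/(m:ℝ) := by
          have h6 := h4.trans_eq h5
          exact div_le_div_of_nonneg_right h6 hm'.le
      _ = (∑ i, fS i x)/(m:ℝ) + (∑ i, ⟪gS i x, h⟫)/(m:ℝ) + (1/2) * ∑ j, L j * (h j)^2 := by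
          field_simp
  -- key one-step estimate
  have step : ∀ (x : EuclideanSpace ℝ (Fin d)) (y : Fin m → EuclideanSpace ℝ (Fin d)),
      (∀ i (j : Fin d), y i j = x j - (c j / (1 + c j / (2 * fS i x) * (gS i x j)^2)) * gS i x j) →
      ∑ i, (f (y i) - fstar) ≤ (m:ℝ) * (ρ * (f x - fstar) + B) := by
    intro x y hy
    have hwj : ∀ j, ∑ i, gS i x j = (m:ℝ) * gf x j := by
      intro j
      have hsa : (∑ i, gS i x) j = ∑ i, gS i x j := by simp
      have h1 : gf x j = (m:ℝ)⁻¹ * ∑ i, gS i x j := by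
        rw [hgfavg x, PiLp.smul_apply, hsa, smul_eq_mul]
      rw [h1]; field_simp
    have hSj : ∀ j, ∑ i, (gS i x j)^2 ≤ m * (σ j)^2 + m * (gf x j)^2 := by
      intro j
      have h1 := hvar x j
      rw [div_le_iff₀ hm'] at h1
      have h2 : ∑ i, (gS i x j)^2
          = (∑ i, (gS i x j - gf x j)^2) + 2 * gf x j * (∑ i, gS i x j) - m * (gf x j)^2 := by
        calc ∑ i, (gS i x j)^2
            = ∑ i, ((gS i x j - gf x j)^2 + 2 * gf x j * gS i x j - (gf x j)^2) :=
              Finset.sum_congr rfl fun i _ => by ring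
          _ = (∑ i, (gS i x j - gf x j)^2) + 2 * gf x j * (∑ i, gS i x j) - m * (gf x j)^2 := by
              rw [Finset.sum_sub_distrib, Finset.sum_add_distrib, ← Finset.mul_sum,
                Finset.sum_const, Finset.card_univ, Fintype.card_fin, nsmul_eq_mul]
      rw [h2, hwj j]
      nlinarith [h1]
    have hb1 : ∀ i, f (y i) ≤ f x + ∑ j, ((-(c j * gf x j)) * gS i x j
        + (L j * (c j)^2) * (gS i x j)^2 + L j * (c j)^2 / 2 * (gf x j)^2) := by
      intro i
      have hyi : y i = x + (y i - x) := by abel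
      have hvij : ∀ j : Fin d, (y i - x) j
          = -(c j / (1 + c j / (2 * fS i x) * (gS i x j)^2) * gS i x j) := by
        intro j
        have : (y i - x) j = y i j - x j := rfl
        rw [this, hy i j]; ring
      calc f (y i) = f (x + (y i - x)) := by rw [← hyi]
        _ ≤ f x + ⟪gf x, y i - x⟫ + (1/2) * ∑ j, L j * ((y i - x) j)^2 := smoothf x _
        _ = f x + ∑ j, (gf x j * ((y i - x) j) + (1/2) * (L j * ((y i - x) j)^2)) := by
            rw [PiLp.inner_apply]
            simp only [RCLike.inner_apply, conj_trivial]
            rw [Finset.mul_sum, add_assoc, ← Finset.sum_add_distrib]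
            congr 1; exact Finset.sum_congr rfl fun j _ => by ring
        _ ≤ f x + ∑ j, ((-(c j * gf x j)) * gS i x j
              + (L j * (c j)^2) * (gS i x j)^2 + L j * (c j)^2 / 2 * (gf x j)^2) := by
            have hstep : ∀ j ∈ Finset.univ, gf x j * ((y i - x) j) + (1/2) * (L j * ((y i - x) j)^2)
                ≤ (-(c j * gf x j)) * gS i x j + (L j * (c j)^2) * (gS i x j)^2
                  + L j * (c j)^2 / 2 * (gf x j)^2 := by
              intro j _
              rw [hvij j]
              exact ngn_step_coord (L j) (c j) (fS i x) (gS i x j) (gf x j) (hc j)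
                (hnonneg i x) (hgbd i x j) (hL j)
            exact add_le_add_right (Finset.sum_le_sum hstep) _
    have hb2 : ∑ i, f (y i) ≤ (m:ℝ) * f x + ∑ j, ((-(c j * gf x j)) * ((m:ℝ) * gf x j)
        + (L j * (c j)^2) * (∑ i, (gS i x j)^2) + (m:ℝ) * (L j * (c j)^2 / 2 * (gf x j)^2)) := by
      calc ∑ i, f (y i)
          ≤ ∑ i : Fin m, (f x + ∑ j, ((-(c j * gf x j)) * gS i x j
              + (L j * (c j)^2) * (gS i x j)^2 + L j * (c j)^2 / 2 * (gf x j)^2)) :=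
            Finset.sum_le_sum fun i _ => hb1 i
        _ = (m:ℝ) * f x + ∑ i : Fin m, ∑ j, ((-(c j * gf x j)) * gS i x j
              + (L j * (c j)^2) * (gS i x j)^2 + L j * (c j)^2 / 2 * (gf x j)^2) := by
            rw [Finset.sum_add_distrib, Finset.sum_const, Finset.card_univ,
              Fintype.card_fin, nsmul_eq_mul]
        _ = (m:ℝ) * f x + ∑ j, ∑ i : Fin m, ((-(c j * gf x j)) * gS i x j
              + (L j * (c j)^2) * (gS i x j)^2 + L j * (c j)^2 / 2 * (gf x j)^2) := by
            rw [Finset.sum_comm]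
        _ = (m:ℝ) * f x + ∑ j, ((-(c j * gf x j)) * ((m:ℝ) * gf x j)
              + (L j * (c j)^2) * (∑ i, (gS i x j)^2)
              + (m:ℝ) * (L j * (c j)^2 / 2 * (gf x j)^2)) := by
            congr 1
            refine Finset.sum_congr rfl fun j _ => ?_
            rw [Finset.sum_add_distrib, Finset.sum_add_distrib, ← Finset.mul_sum,
              ← Finset.mul_sum, Finset.sum_const, Finset.card_univ, Fintype.card_fin,
              nsmul_eq_mul, hwj j, mul_comm ((m:ℝ)) (L j * (c j)^2 / 2 * (gf x j)^2)]
    have hb3 : ∑ j, ((-(c j * gf x j)) * ((m:ℝ) * gf x j)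
          + (L j * (c j)^2) * (∑ i, (gS i x j)^2) + (m:ℝ) * (L j * (c j)^2 / 2 * (gf x j)^2))
        ≤ ∑ j, (m:ℝ) * (-(cmin/4) * (gf x j)^2 + L j * (c j)^2 * (σ j)^2) :=
      Finset.sum_le_sum fun j _ => ngn_sum_j_bound (L j) (c j) cmin (σ j) (gf x j) _ _
        hm'.le (hc j) (hL j) (hcLhalf j) (hcmin_le j) (hSj j)
    have hnorm : ∑ j, (gf x j)^2 = ‖gf x‖^2 := by
      rw [← real_inner_self_eq_norm_sq]
      simp [PiLp.inner_apply, RCLike.inner_apply, conj_trivial, sq]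
      rw [EuclideanSpace.norm_eq, Real.mul_self_sqrt (by positivity)]
      simp [Real.norm_eq_abs, sq]
    have hb4 : ∑ j, (m:ℝ) * (-(cmin/4) * (gf x j)^2 + L j * (c j)^2 * (σ j)^2)
        = (m:ℝ) * (-(cmin/4) * ‖gf x‖^2 + B) := by
      rw [← hnorm, hB, Finset.mul_sum, ← Finset.sum_add_distrib, Finset.mul_sum]
    have h5 : ∑ i, (f (y i) - fstar) = ∑ i, f (y i) - (m:ℝ) * fstar := by
      rw [Finset.sum_sub_distrib, Finset.sum_const, Finset.card_univ, Fintype.card_fin,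
        nsmul_eq_mul]
    have hPLx : 2 * μ * (f x - fstar) ≤ ‖gf x‖^2 := hPL x
    have hΔ : 0 ≤ f x - fstar := sub_nonneg.2 (hfstar x)
    have htot : ∑ i, f (y i) ≤ (m:ℝ) * f x + (m:ℝ) * (-(cmin/4) * ‖gf x‖^2 + B) := by
      have := hb3.trans_eq hb4
      linarith [hb2]
    rw [h5, hρ]
    have k1 : (m:ℝ) * (cmin/4) * (2*μ*(f x - fstar)) ≤ (m:ℝ) * (cmin/4) * ‖gf x‖^2 :=
      mul_le_mul_of_nonneg_left hPLx (by positivity)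
    have k2 : 0 ≤ (m:ℝ) * (μ * cmin * (f x - fstar)) :=
      mul_nonneg hm'.le (mul_nonneg (mul_nonneg hμ.le hcmin_pos.le) hΔ)
    nlinarith [htot, k1, k2]
  -- recursion over one step
  have hrec : ∀ k : ℕ, (∑ s : Fin (k+1) → Fin m, (f (X (k+1) s) - fstar))
      ≤ ∑ t : Fin k → Fin m, (m:ℝ) * (ρ * (f (X k t) - fstar) + B) := by
    intro k
    rw [← Equiv.sum_comp (Fin.snocEquiv (fun _ : Fin (k+1) => Fin m))
      (fun s => f (X (k+1) s) - fstar), Fintype.sum_prod_type, Finset.sum_comm]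
    apply Finset.sum_le_sum
    intro t _
    apply step (X k t)
    intro i j
    have h1 := hXs k (Fin.snoc t i) j
    have h2 : (fun l : Fin k => (Fin.snoc t i : Fin (k+1) → Fin m) (Fin.castSucc l)) = t := by
      funext l; simp
    rw [h2, Fin.snoc_last] at h1
    exact h1
  -- main induction
  have hmain : ∀ k : ℕ, (∑ s : Fin k → Fin m, (f (X k s) - fstar)) / (m:ℝ)^k
      ≤ ρ^k * (f x0 - fstar) + B * ∑ i ∈ Finset.range k, ρ^i := by
    intro k
    induction k with
    | zero =>
      have h0 : (∑ s : Fin 0 → Fin m, (f (X 0 s) - fstar)) = f x0 - fstar := by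
        rw [Finset.sum_congr rfl (fun s _ => by rw [hX0 s]), Finset.sum_const,
          Finset.card_univ]
        simp
      rw [h0]
      simp
    | succ k ih =>
      have h1 := hrec k
      have h2 : ∑ t : Fin k → Fin m, (m:ℝ) * (ρ * (f (X k t) - fstar) + B)
          = (m:ℝ) * ρ * (∑ t : Fin k → Fin m, (f (X k t) - fstar)) + (m:ℝ)^(k+1) * B := by
        rw [← Finset.mul_sum, Finset.sum_add_distrib, ← Finset.mul_sum, Finset.sum_const,
          Finset.card_univ]
        have hcard : Fintype.card (Fin k → Fin m) = m ^ k := by simp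
        rw [hcard, nsmul_eq_mul]
        push_cast
        ring
      have h3 : (∑ s : Fin (k+1) → Fin m, (f (X (k+1) s) - fstar)) / (m:ℝ)^(k+1)
          ≤ ρ * ((∑ s : Fin k → Fin m, (f (X k s) - fstar)) / (m:ℝ)^k) + B := by
        rw [div_le_iff₀ (by positivity)]
        calc (∑ s : Fin (k+1) → Fin m, (f (X (k+1) s) - fstar))
            ≤ (m:ℝ) * ρ * (∑ t : Fin k → Fin m, (f (X k t) - fstar)) + (m:ℝ)^(k+1) * B :=
              h1.trans_eq h2
          _ = (ρ * ((∑ s : Fin k → Fin m, (f (X k s) - fstar)) / (m:ℝ)^k) + B) * (m:ℝ)^(k+1) := by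
              field_simp
              ring
      calc (∑ s : Fin (k+1) → Fin m, (f (X (k+1) s) - fstar)) / (m:ℝ)^(k+1)
          ≤ ρ * ((∑ s : Fin k → Fin m, (f (X k s) - fstar)) / (m:ℝ)^k) + B := h3
        _ ≤ ρ * (ρ^k * (f x0 - fstar) + B * ∑ i ∈ Finset.range k, ρ^i) + B := by
            have := mul_le_mul_of_nonneg_left ih hρ0
            linarith
        _ = ρ^(k+1) * (f x0 - fstar) + B * ∑ i ∈ Finset.range (k+1), ρ^i := by
            rw [geom_sum_succ, pow_succ]
            ring
  have hgeo : ∑ i ∈ Finset.range K, ρ^i ≤ 6/(μ*cmin) := by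
    rw [geom_sum_eq (ne_of_lt hρ1) K]
    have h2 : (ρ^K - 1)/(ρ - 1) = (1 - ρ^K)/(1 - ρ) := by
      rw [← neg_div_neg_eq]
      ring_nf
    rw [h2, hρ]
    have hpk : 0 ≤ ρ^K := pow_nonneg hρ0 K
    rw [hρ] at hpk
    have hd1 : (0:ℝ) < 1 - (1 - μ * cmin / 6) := by
      have : (0:ℝ) < μ * cmin := mul_pos hμ hcmin_pos
      linarith
    rw [div_le_div_iff₀ hd1 (by positivity : (0:ℝ) < μ * cmin)]
    nlinarith [mul_nonneg hpk (mul_pos hμ hcmin_pos).le]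
  have hfinal := hmain K
  have hgB : B * ∑ i ∈ Finset.range K, ρ^i ≤ 9/(μ*cmin) * B := by
    have h1 : B * ∑ i ∈ Finset.range K, ρ^i ≤ B * (6/(μ*cmin)) :=
      mul_le_mul_of_nonneg_left hgeo hB0
    have h2 : B * (6/(μ*cmin)) ≤ 9/(μ*cmin) * B := by
      rw [mul_comm]
      exact mul_le_mul_of_nonneg_right
        (div_le_div_of_nonneg_right (by norm_num : (6:ℝ) ≤ 9) (mul_pos hμ hcmin_pos).le) hB0
    linarith
  linarith [hfinal, hgB]
end

section
/- For the one-step descent of a function satisfying coordinate-wise smoothness, if at iteration k the per-coordinate step-sizes satisfy γ_j^k ∈ [c_j/(1+c_j L_j), c_j] with c_j ≤ 1/(2L_j), then E_k[f(x^{k+1})] − f(x^k) ≤ Σ_j (−(c_j/12) (∂_j f(x^k))² + (3 L_j c_j²/2) σ_j²). -/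
open RealInnerProductSpace

set_option maxHeartbeats 1000000 in
lemma ngn_key {m : ℕ} (hm : 0 < m) (L c g σ2 : ℝ) (hL : 0 < L) (hc : 0 < c)
    (hcL : c * L ≤ 1/2) (G γ : Fin m → ℝ)
    (hγ : ∀ i, c / (1 + c * L) ≤ γ i ∧ γ i ≤ c)
    (hmean : (∑ i, G i) / m = g)
    (hvar : (∑ i, (G i - g) ^ 2) / m ≤ σ2) :
    (∑ i, (g * (-(γ i * G i)) + 1/2 * (L * (γ i * G i) ^ 2))) / m
      ≤ -(c / 12) * g ^ 2 + 3 * L * c ^ 2 / 2 * σ2 := by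
  have hmpos : (0:ℝ) < m := by exact_mod_cast hm
  have hmne : (m:ℝ) ≠ 0 := ne_of_gt hmpos
  obtain ⟨a, ha_def⟩ : ∃ a : ℝ, a = c / (1 + c * L) := ⟨_, rfl⟩
  have hden : (0:ℝ) < 1 + c * L := by positivity
  have haeq : a * (1 + c * L) = c := by rw [ha_def]; exact div_mul_cancel₀ _ (ne_of_gt hden)
  have ha_pos : 0 < a := by rw [ha_def]; positivity
  have ha_le : a ≤ c := by
    rw [ha_def]; exact div_le_self hc.le (by nlinarith [mul_pos hc hL])
  obtain ⟨A, hA⟩ : ∃ A : ℝ, A = -a + (c - a)/2 + L/2 * (2*c^2 - a^2) := ⟨_, rfl⟩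
  obtain ⟨B, hB⟩ : ∃ B : ℝ, B = (c - a)/2 + L/2 * (2*c^2 - a^2) := ⟨_, rfl⟩
  have hca : c - a = a * c * L := by linear_combination -haeq
  have hBnn : 0 ≤ B := by
    have h1 : a^2 ≤ c^2 := by nlinarith [sq_nonneg (c-a), mul_pos ha_pos hc]
    have h2 : 0 ≤ L/2 * (2*c^2 - a^2) := mul_nonneg (by linarith) (by nlinarith [sq_nonneg c])
    rw [hB]; linarith
  have hσ2 : 0 ≤ σ2 := le_trans (by positivity) hvar
  -- per-sample bound via explicit SOS decomposition
  have hsample : ∀ i, g * (-(γ i * G i)) + 1/2 * (L * (γ i * G i) ^ 2)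
      ≤ A * g^2 + B * (G i - g)^2 + ((-a + L * a^2) * g) * (G i - g) := by
    intro i
    obtain ⟨h1, h2⟩ := hγ i
    have h1' : a ≤ γ i := by rw [ha_def]; exact h1
    have hγa : 0 ≤ γ i - a := by linarith
    have hcγ : 0 ≤ c - γ i := by linarith
    have hγpos : 0 < γ i := lt_of_lt_of_le ha_pos h1'
    have hid : (A * g^2 + B * (G i - g)^2 + ((-a + L * a^2) * g) * (G i - g))
        - (g * (-(γ i * G i)) + 1/2 * (L * (γ i * G i) ^ 2))
        = (γ i - a) * g^2 + ((c - γ i)/2) * (g^2 + (G i - g)^2)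
          + ((γ i - a)/2) * (g + (G i - g))^2
          + L * ((c - γ i) * (c + γ i)) * (g^2 + (G i - g)^2)
          + (L/2) * ((γ i - a) * (γ i + a)) * (g - (G i - g))^2 := by
      rw [hA, hB]; ring
    have n1 : 0 ≤ (γ i - a) * g^2 := mul_nonneg hγa (sq_nonneg g)
    have n2 : 0 ≤ ((c - γ i)/2) * (g^2 + (G i - g)^2) :=
      mul_nonneg (by linarith) (by positivity)
    have n3 : 0 ≤ ((γ i - a)/2) * (g + (G i - g))^2 :=
      mul_nonneg (by linarith) (sq_nonneg _)
    have n4 : 0 ≤ L * ((c - γ i) * (c + γ i)) * (g^2 + (G i - g)^2) :=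
      mul_nonneg (mul_nonneg hL.le (mul_nonneg hcγ (by linarith))) (by positivity)
    have n5 : 0 ≤ (L/2) * ((γ i - a) * (γ i + a)) * (g - (G i - g))^2 :=
      mul_nonneg (mul_nonneg (by linarith) (mul_nonneg hγa (by linarith))) (sq_nonneg _)
    linarith [hid, n1, n2, n3, n4, n5]
  have hGsum : (∑ i, G i) = m * g := by
    field_simp at hmean; linarith [hmean]
  have hesum : ∑ i, (G i - g) = 0 := by
    rw [Finset.sum_sub_distrib, Finset.sum_const, Finset.card_univ, Fintype.card_fin,
      hGsum, nsmul_eq_mul]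
    ring
  have hsum1 : (∑ i, (g * (-(γ i * G i)) + 1/2 * (L * (γ i * G i) ^ 2)))
      ≤ m * (A * g^2) + B * ∑ i, (G i - g)^2 := by
    calc (∑ i, (g * (-(γ i * G i)) + 1/2 * (L * (γ i * G i) ^ 2)))
        ≤ ∑ i, (A * g^2 + B * (G i - g)^2 + ((-a + L * a^2) * g) * (G i - g)) :=
          Finset.sum_le_sum fun i _ => hsample i
      _ = m * (A * g^2) + B * ∑ i, (G i - g)^2 := by
          rw [Finset.sum_add_distrib, Finset.sum_add_distrib, Finset.sum_const,
            Finset.card_univ, Fintype.card_fin, ← Finset.mul_sum, ← Finset.mul_sum, hesum,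
            nsmul_eq_mul]
          ring
  have hAle : A ≤ -(c/12) := by
    rw [← sub_nonneg, hA, ha_def]
    have expand : -(c/12) - (-(c/(1+c*L)) + (c - c/(1+c*L))/2 + L/2*(2*c^2 - (c/(1+c*L))^2))
        = (c * (3/4 + (1/2 - c*L) * (12*(c*L)^2 + 37*(c*L) + 41/2)) / 12) / (1+c*L)^2 := by
      field_simp
      ring
    rw [expand]
    apply div_nonneg _ (by positivity)
    apply div_nonneg _ (by norm_num)
    apply mul_nonneg hc.le
    have : 0 ≤ (1/2 - c*L) * (12*(c*L)^2 + 37*(c*L) + 41/2) :=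
      mul_nonneg (by linarith) (by positivity)
    linarith
  have hBle : B ≤ 3 * L * c^2 / 2 := by
    rw [hB]
    linarith [hca, mul_nonneg hL.le (sq_nonneg (c-a)),
      mul_nonneg hL.le (mul_nonneg ha_pos.le hc.le)]
  have hdiv : (∑ i, (g * (-(γ i * G i)) + 1/2 * (L * (γ i * G i) ^ 2))) / m
      ≤ (m * (A * g^2) + B * ∑ i, (G i - g)^2) / m := by
    exact div_le_div_of_nonneg_right hsum1 hmpos.le
  have heq : (m * (A * g^2) + B * ∑ i, (G i - g)^2) / m
      = A * g^2 + B * ((∑ i, (G i - g)^2) / m) := by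
    rw [add_div, mul_div_cancel_left₀ _ hmne, mul_div_assoc]
  have t1 : A * g^2 ≤ -(c/12) * g^2 := mul_le_mul_of_nonneg_right hAle (sq_nonneg g)
  have t2 : B * ((∑ i, (G i - g)^2) / m) ≤ 3 * L * c^2 / 2 * σ2 :=
    le_trans (mul_le_mul_of_nonneg_left hvar hBnn)
      (mul_le_mul_of_nonneg_right hBle hσ2)
  calc (∑ i, (g * (-(γ i * G i)) + 1/2 * (L * (γ i * G i) ^ 2))) / m
      ≤ A * g^2 + B * ((∑ i, (G i - g)^2) / m) := heq ▸ hdiv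
    _ ≤ -(c/12) * g^2 + 3 * L * c^2 / 2 * σ2 := by linarith

set_option maxHeartbeats 1000000 in
/-- One-step descent inequality for coordinate-wise step-sizes lying in the NGN-D
interval. `G i` is the stochastic gradient at `xk` for sample `i`, sampled uniformly. -/
theorem ngn_d_one_step_descent {d m : ℕ} (hm : 0 < m)
    (f : EuclideanSpace ℝ (Fin d) → ℝ)
    (gf : EuclideanSpace ℝ (Fin d) → EuclideanSpace ℝ (Fin d))
    (hgf : ∀ x, HasGradientAt f (gf x) x)
    (L : Fin d → ℝ) (hL : ∀ j, 0 < L j)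
    (hsmooth : ∀ x h, f (x + h) ≤ f x + ⟪gf x, h⟫ + (1/2) * ∑ j, L j * (h j) ^ 2)
    (xk : EuclideanSpace ℝ (Fin d))
    (G : Fin m → EuclideanSpace ℝ (Fin d))
    (hunbiased : ∀ j, (∑ i, G i j) / m = gf xk j)
    (σ : Fin d → ℝ)
    (hvar : ∀ j, (∑ i, (G i j - gf xk j) ^ 2) / m ≤ σ j ^ 2)
    (c : Fin d → ℝ) (hc : ∀ j, 0 < c j) (hcL : ∀ j, c j ≤ 1 / (2 * L j))
    (γ : Fin m → Fin d → ℝ)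
    (hγ : ∀ i j, c j / (1 + c j * L j) ≤ γ i j ∧ γ i j ≤ c j)
    (x' : Fin m → EuclideanSpace ℝ (Fin d))
    (hx' : ∀ i j, x' i j = xk j - γ i j * G i j) :
    (∑ i, f (x' i)) / m - f xk ≤
      ∑ j, (-(c j / 12) * (gf xk j) ^ 2 + 3 * L j * (c j) ^ 2 / 2 * σ j ^ 2) := by
  have hmpos : (0:ℝ) < m := by exact_mod_cast hm
  have hmne : (m:ℝ) ≠ 0 := ne_of_gt hmpos
  set T : Fin m → Fin d → ℝ :=
    fun i j => gf xk j * (-(γ i j * G i j)) + 1/2 * (L j * (γ i j * G i j) ^ 2) with hT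
  have hstep : ∀ i, f (x' i) - f xk ≤ ∑ j, T i j := by
    intro i
    have hx : x' i = xk + (show EuclideanSpace ℝ (Fin d) from WithLp.toLp 2 (fun j => -(γ i j * G i j))) := by
      ext j
      simp only [PiLp.add_apply, PiLp.toLp_apply, hx' i j]
      ring
    have hs := hsmooth xk (show EuclideanSpace ℝ (Fin d) from WithLp.toLp 2 (fun j => -(γ i j * G i j)))
    rw [← hx] at hs
    have hinner : ⟪gf xk, (show EuclideanSpace ℝ (Fin d) from WithLp.toLp 2 (fun j => -(γ i j * G i j)))⟫
        = ∑ j, gf xk j * (-(γ i j * G i j)) := by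
      rw [PiLp.inner_apply]
      simp [RCLike.inner_apply, conj_trivial, mul_comm]
    have hsq : ∑ j, L j * ((show EuclideanSpace ℝ (Fin d) from WithLp.toLp 2 (fun j => -(γ i j * G i j))) j) ^ 2
        = ∑ j, L j * (γ i j * G i j) ^ 2 := by
      apply Finset.sum_congr rfl
      intro j _
      simp only [PiLp.toLp_apply]
      ring
    rw [hinner, hsq] at hs
    have hTsum : ∑ j, T i j = (∑ j, gf xk j * (-(γ i j * G i j)))
        + (1/2) * ∑ j, (L j * (γ i j * G i j) ^ 2) := by
      rw [hT, Finset.sum_add_distrib, Finset.mul_sum]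
    linarith [hTsum, hs]
  have h2 : (∑ i, f (x' i)) / m - f xk = (∑ i, (f (x' i) - f xk)) / m := by
    rw [Finset.sum_sub_distrib, Finset.sum_const, Finset.card_univ, Fintype.card_fin,
      nsmul_eq_mul, sub_div, mul_div_cancel_left₀ _ hmne]
  have h3 : (∑ i, (f (x' i) - f xk)) ≤ ∑ j, ∑ i, T i j := by
    rw [← Finset.sum_comm]
    exact Finset.sum_le_sum fun i _ => hstep i
  rw [h2]
  calc (∑ i, (f (x' i) - f xk)) / m ≤ (∑ j, ∑ i, T i j) / m :=
        div_le_div_of_nonneg_right h3 hmpos.le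
    _ = ∑ j, (∑ i, T i j) / m := Finset.sum_div _ _ _
    _ ≤ ∑ j, (-(c j / 12) * (gf xk j) ^ 2 + 3 * L j * (c j) ^ 2 / 2 * σ j ^ 2) := by
        apply Finset.sum_le_sum
        intro j _
        have hcLj : c j * L j ≤ 1/2 := by
          have h := hcL j
          rw [le_div_iff₀ (mul_pos two_pos (hL j))] at h
          linarith
        exact ngn_key hm (L j) (c j) (gf xk j) (σ j ^ 2) (hL j) (hc j) hcLj
          (fun i => G i j) (fun i => γ i j) (fun i => hγ i j) (hunbiased j) (hvar j)
end

section
/- Minimizing the regularized linearization p ↦ (r(x) + ⟨∇r(x), p⟩)² + (1/(2c)) pᵀ Σ p over p ∈ ℝ^d, where Σ is symmetric positive definite, r(x) = √(f(x)), f(x) > 0, yields the unique minimizer p* = −(c / (1 + (c/(2 f(x))) ‖∇f(x)‖²_{Σ^{-1}})) Σ^{-1} ∇f(x), where ‖v‖²_{Σ^{-1}} = vᵀ Σ^{-1} v. -/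
open Matrix

/-- The regularized linearization of `r = √f` with a positive-definite weight
matrix `Σ` has the preconditioned NGN update as its unique minimizer. -/
theorem ngn_diagonal_minimizer {d : ℕ}
    (f : (Fin d → ℝ) → ℝ) (x : Fin d → ℝ)
    (gf : Fin d → ℝ)
    (hdiff : DifferentiableAt ℝ f x)
    (hgrad : ∀ p, fderiv ℝ f x p = gf ⬝ᵥ p)
    (hfx : 0 < f x)
    (c : ℝ) (hc : 0 < c)
    (S : Matrix (Fin d) (Fin d) ℝ) (hS : S.PosDef) :
    let obj : (Fin d → ℝ) → ℝ := fun p =>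
      (Real.sqrt (f x) + ((1 / (2 * Real.sqrt (f x))) • gf) ⬝ᵥ p) ^ 2 +
        (1 / (2 * c)) * (p ⬝ᵥ S.mulVec p)
    let pstar : Fin d → ℝ :=
      -(c / (1 + c / (2 * f x) * (gf ⬝ᵥ S⁻¹.mulVec gf))) • S⁻¹.mulVec gf
    (∀ p, obj pstar ≤ obj p) ∧ ∀ p, obj p ≤ obj pstar → p = pstar := by
  intro obj pstar
  have ha : 0 < Real.sqrt (f x) := Real.sqrt_pos.2 hfx
  set a := Real.sqrt (f x) with ha_def
  have ha2 : a ^ 2 = f x := Real.sq_sqrt hfx.le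
  have hdet : IsUnit S.det := hS.det_pos.ne'.isUnit
  have hSw : S.mulVec (S⁻¹.mulVec gf) = gf := by
    rw [mulVec_mulVec, mul_nonsing_inv _ hdet, one_mulVec]
  set w := S⁻¹.mulVec gf with hw
  set K := gf ⬝ᵥ w with hKdef
  have hK0 : 0 ≤ K := by
    have := hS.inv.posSemidef.dotProduct_mulVec_nonneg gf
    simpa [hKdef, hw] using this
  have hD : 0 < 1 + c / (2 * f x) * K := by positivity
  set s := c / (1 + c / (2 * f x) * K) with hs_def
  have hrel : s * (2 * f x + c * K) = 2 * f x * c := by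
    rw [hs_def]
    field_simp
  have hsym2 : ∀ p q : Fin d → ℝ, p ⬝ᵥ S.mulVec q = q ⬝ᵥ S.mulVec p := by
    intro p q
    have hsym : Sᵀ = S := by
      have := hS.1; rwa [IsHermitian, conjTranspose_eq_transpose_of_trivial] at this
    rw [dotProduct_mulVec, ← mulVec_transpose, hsym, dotProduct_comm]
  have hpstar : pstar = (-s) • w := by
    simp only [pstar, hs_def, hw, hKdef, neg_smul]
  have hSpstar : S.mulVec pstar = (-s) • gf := by
    rw [hpstar, mulVec_smul, hw, hSw]
  have hgfpstar : gf ⬝ᵥ pstar = -(s * K) := by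
    rw [hpstar, dotProduct_smul, hKdef]; ring_nf
  have hpSp : pstar ⬝ᵥ S.mulVec pstar = s ^ 2 * K := by
    rw [hSpstar, hpstar, smul_dotProduct, dotProduct_smul, smul_eq_mul, smul_eq_mul,
      dotProduct_comm w gf, ← hKdef]
    ring
  have hcross : ∀ p : Fin d → ℝ, p ⬝ᵥ S.mulVec pstar = -(s * (gf ⬝ᵥ p)) := by
    intro p
    rw [hSpstar, dotProduct_smul, smul_eq_mul, dotProduct_comm]
    ring
  have key : ∀ p : Fin d → ℝ,
      obj p = obj pstar + (1 / (2 * a) * (gf ⬝ᵥ p + s * K)) ^ 2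
        + 1 / (2 * c) * ((p - pstar) ⬝ᵥ S.mulVec (p - pstar)) := by
    intro p
    have hexp : (p - pstar) ⬝ᵥ S.mulVec (p - pstar)
        = p ⬝ᵥ S.mulVec p + 2 * s * (gf ⬝ᵥ p) + s ^ 2 * K := by
      rw [mulVec_sub, dotProduct_sub, sub_dotProduct, sub_dotProduct,
        hcross p, hpSp, hsym2 pstar p, hcross p]
      ring
    simp only [obj, hexp, smul_dotProduct, smul_eq_mul, hgfpstar, hpSp]
    rw [← ha_def]
    have hrel' : s * (2 * a ^ 2 + c * K) = 2 * a ^ 2 * c := by rw [ha2]; exact hrel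
    have ha' : a ≠ 0 := ha.ne'
    have hc' : c ≠ 0 := hc.ne'
    clear_value s a
    field_simp
    linear_combination (-2) * (gf ⬝ᵥ p + s * K) * hrel' 
  constructor
  · intro p
    have hq : 0 ≤ (p - pstar) ⬝ᵥ S.mulVec (p - pstar) := by
      have := hS.posSemidef.dotProduct_mulVec_nonneg (p - pstar)
      simpa using this
    rw [key p]
    have h1 : 0 ≤ (1 / (2 * a) * (gf ⬝ᵥ p + s * K)) ^ 2 := sq_nonneg _
    have h2 : 0 ≤ 1 / (2 * c) * ((p - pstar) ⬝ᵥ S.mulVec (p - pstar)) :=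
      mul_nonneg (by positivity) hq
    linarith
  · intro p hp
    have hid := key p
    have hq : 0 ≤ (p - pstar) ⬝ᵥ S.mulVec (p - pstar) := by
      have := hS.posSemidef.dotProduct_mulVec_nonneg (p - pstar)
      simpa using this
    have hsq : 0 ≤ (1 / (2 * a) * (gf ⬝ᵥ p + s * K)) ^ 2 := sq_nonneg _
    have h2c : 0 < 1 / (2 * c) := by positivity
    have hle : 1 / (2 * c) * ((p - pstar) ⬝ᵥ S.mulVec (p - pstar)) ≤ 0 := by
      rw [hid] at hp; linarith
    have hQle : (p - pstar) ⬝ᵥ S.mulVec (p - pstar) ≤ 0 := by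
      by_contra h
      push_neg at h
      nlinarith
    have hq0 : (p - pstar) ⬝ᵥ S.mulVec (p - pstar) = 0 := le_antisymm hQle hq
    by_contra hne
    have hne' : p - pstar ≠ 0 := sub_ne_zero.2 hne
    have hpos : 0 < (p - pstar) ⬝ᵥ S.mulVec (p - pstar) := by
      have := hS.dotProduct_mulVec_pos hne'
      simpa using this
    exact hpos.ne' hq0
end
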